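/- Let G = Z_n be a cyclic group, q the largest prime factor of n with ν_q(n) = t, and assume n ≤ q^{2t} - 1. If gcd(k, n) = 1, then for any x ∈ Z_n the incidence structure (Z_n, B_k^x) is not a 1-design. -/

import Mathlib

open Finset

/-- The family of `k`-element subsets of `G` whose elements sum to `x`. -/
def sumBlocks (G : Type) [AddCommGroup G] [Fintype G] [DecidableEq G]
    (k : ℕ) (x : G) : Finset (Finset G) :=
  Finset.univ.filter (fun T => T.card = k ∧ T.sum id = x)

/-- The family of `k`-element subsets of `G \ {0}` whose elements sum to `x`. -/
def sumBlocksStar (G : Type) [AddCommGroup G] [Fintype G] [DecidableEq G]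
    (k : ℕ) (x : G) : Finset (Finset G) :=
  Finset.univ.filter (fun T => T.card = k ∧ T.sum id = x ∧ (0 : G) ∉ T)

/-- `(G, B_k^x)` is a 1-design: the block family is nonempty and every
point of `G` lies in the same number of blocks. -/
def isOneDesign (G : Type) [AddCommGroup G] [Fintype G] [DecidableEq G]
    (k : ℕ) (x : G) : Prop :=
  sumBlocks G k x ≠ ∅ ∧ ∃ r : ℕ, ∀ y : G,
    ((sumBlocks G k x).filter (fun B => y ∈ B)).card = r

/-- `e(x) = max {d : d ∣ exp(G), x ∈ dG}`. -/
noncomputable def eMax (G : Type) [AddCommGroup G] [Fintype G] [DecidableEq G] (x : G) : ℕ :=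
  Nat.findGreatest (fun d => d ∣ AddMonoid.exponent G ∧ ∃ y : G, d • y = x)
    (AddMonoid.exponent G)

section aux

variable {G : Type} [AddCommGroup G] [Fintype G] [DecidableEq G]

def sumBlocks' (G : Type) [AddCommGroup G] [Fintype G] [DecidableEq G]
    (k : ℕ) (x : G) : Finset (Finset G) :=
  Finset.univ.filter (fun T => T.card = k ∧ T.sum id = x)

lemma card_sumBlocks'_translate (k : ℕ) (y c : G) :
    (sumBlocks' G k y).card = (sumBlocks' G k (y + k • c)).card := by
  apply Finset.card_nbij' (fun T => T.image (· + c)) (fun T => T.image (· + (-c)))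
  · intro T hT
    simp only [sumBlocks', Finset.mem_coe, mem_filter, mem_univ, true_and] at hT ⊢
    have hinj : Function.Injective (· + c) := add_left_injective c
    constructor
    · rw [Finset.card_image_of_injective _ hinj, hT.1]
    · rw [Finset.sum_image (fun a _ b _ h => hinj h)]
      simp only [id_eq]
      have hsum : ∑ a ∈ T, a = y := hT.2
      rw [Finset.sum_add_distrib, Finset.sum_const, hT.1, hsum]
  · intro T hT
    simp only [sumBlocks', Finset.mem_coe, mem_filter, mem_univ, true_and] at hT ⊢
    have hinj : Function.Injective (· + (-c)) := add_left_injective (-c)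
    constructor
    · rw [Finset.card_image_of_injective _ hinj, hT.1]
    · rw [Finset.sum_image (fun a _ b _ h => hinj h)]
      simp only [id_eq]
      have hsum : ∑ a ∈ T, a = y + k • c := hT.2
      rw [Finset.sum_add_distrib, Finset.sum_const, hT.1, hsum, smul_neg]
      abel
  · intro T _
    ext a
    simp only [Finset.mem_image]
    constructor
    · rintro ⟨b, ⟨d, hd, rfl⟩, rfl⟩; simpa using hd
    · intro ha; exact ⟨a + c, ⟨a, ha, rfl⟩, by abel⟩
  · intro T _
    ext a
    simp only [Finset.mem_image]
    constructor
    · rintro ⟨b, ⟨d, hd, rfl⟩, rfl⟩; simpa using hd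
    · intro ha; exact ⟨a + -c, ⟨a, ha, rfl⟩, by abel⟩

lemma sum_card_sumBlocks' (k : ℕ) :
    ∑ y : G, (sumBlocks' G k y).card = (Fintype.card G).choose k := by
  have h : (Finset.powersetCard k (univ : Finset G)).card
      = ∑ y : G, ((Finset.powersetCard k (univ : Finset G)).filter
        (fun T => T.sum id = y)).card := by
    exact Finset.card_eq_sum_card_fiberwise (fun T _ => mem_univ _)
  rw [Finset.card_powersetCard, Finset.card_univ] at h
  rw [h]
  apply Finset.sum_congr rfl
  intro y _
  congr 1
  ext T
  simp [sumBlocks', Finset.mem_powersetCard_univ, and_comm]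

lemma design_count (k : ℕ) (x : G) (r : ℕ)
    (hr : ∀ y : G, ((sumBlocks' G k x).filter (fun B => y ∈ B)).card = r) :
    Fintype.card G * r = (sumBlocks' G k x).card * k := by
  have h1 : ∑ y : G, ((sumBlocks' G k x).filter (fun B => y ∈ B)).card
      = ∑ B ∈ sumBlocks' G k x, B.card := by
    simp only [Finset.card_filter]
    rw [Finset.sum_comm]
    apply Finset.sum_congr rfl
    intro B _
    rw [← Finset.card_filter]
    congr 1
    ext a; simp
  have h2 : ∑ B ∈ sumBlocks' G k x, B.card = (sumBlocks' G k x).card * k := by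
    rw [Finset.sum_congr rfl (fun B hB => ?_), Finset.sum_const, smul_eq_mul]
    exact (Finset.mem_filter.mp hB).2.1
  calc Fintype.card G * r = ∑ _y : G, r := by rw [Finset.sum_const, Finset.card_univ, smul_eq_mul]
    _ = ∑ y : G, ((sumBlocks' G k x).filter (fun B => y ∈ B)).card :=
        (Finset.sum_congr rfl (fun y _ => (hr y).symm))
    _ = (sumBlocks' G k x).card * k := by rw [h1, h2]

end aux

theorem stmt9 (n q t k : ℕ) [NeZero n] (hq : q.Prime) (hqn : q ∣ n)
    (hmax : ∀ r : ℕ, r.Prime → r ∣ n → r ≤ q)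
    (ht : n.factorization q = t) (hle : n ≤ q ^ (2 * t) - 1)
    (hgcd : Nat.gcd k n = 1) (x : ZMod n) :
    ¬ isOneDesign (ZMod n) k x := by
  rintro ⟨hne, r, hr⟩
  have hsb : sumBlocks (ZMod n) k x = sumBlocks' (ZMod n) k x := rfl
  have hn : 0 < n := Nat.pos_of_ne_zero (NeZero.ne n)
  have hcard : Fintype.card (ZMod n) = n := ZMod.card n
  -- k ≤ n
  have hk : k ≤ n := by
    by_contra hk
    push_neg at hk
    apply hne
    rw [Finset.eq_empty_iff_forall_notMem]
    intro T hT
    have h1 : T.card = k := ((Finset.mem_filter.mp hT).2).1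
    have h2 : T.card ≤ n := le_trans (Finset.card_le_univ T) (le_of_eq hcard)
    omega
  -- all fibers have the same cardinality
  have hco : Nat.Coprime k n := hgcd
  have hu : IsUnit ((k : ℕ) : ZMod n) := (ZMod.isUnit_iff_coprime k n).mpr hco
  obtain ⟨u, hu⟩ := hu
  have hconst : ∀ y : ZMod n,
      (sumBlocks' (ZMod n) k y).card = (sumBlocks' (ZMod n) k x).card := by
    intro y
    have h := card_sumBlocks'_translate (G := ZMod n) k x (↑u⁻¹ * (y - x))
    have hcy : x + (k : ℕ) • ((↑u⁻¹ : ZMod n) * (y - x)) = y := by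
      have : (k : ℕ) • ((↑u⁻¹ : ZMod n) * (y - x)) = (↑u : ZMod n) * (↑u⁻¹ * (y - x)) := by
        rw [nsmul_eq_mul, hu]
      rw [this, ← mul_assoc]
      simp
    rw [hcy] at h
    exact h.symm
  -- total count
  set b := (sumBlocks' (ZMod n) k x).card with hb
  have htotal : n * b = n.choose k := by
    have h := sum_card_sumBlocks' (G := ZMod n) k
    rw [hcard] at h
    rw [← h, Finset.sum_congr rfl (fun y _ => hconst y), Finset.sum_const,
      Finset.card_univ, hcard, smul_eq_mul]
  -- design double count
  have hdesign : n * r = b * k := by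
    have h := design_count (G := ZMod n) k x r (fun y => hr y)
    rwa [hcard] at h
  -- divisibility
  have hdvd : n ^ 2 ∣ n.choose k * k := by
    refine ⟨r, ?_⟩
    calc n.choose k * k = (n * b) * k := by rw [htotal]
      _ = n * (b * k) := by ring
      _ = n * (n * r) := by rw [hdesign]
      _ = n ^ 2 * r := by ring
  have hdvd2 : n ^ 2 ∣ n.choose k :=
    Nat.Coprime.dvd_of_dvd_mul_right ((hco.symm).pow_left 2) hdvd
  have hqt : q ^ t ∣ n := ht ▸ Nat.ordProj_dvd n q
  have hdvd3 : q ^ (2 * t) ∣ n.choose k := by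
    refine dvd_trans ?_ hdvd2
    have : q ^ (2 * t) = (q ^ t) ^ 2 := by ring
    rw [this]
    exact pow_dvd_pow_of_dvd hqt 2
  have hpos : 0 < n.choose k := Nat.choose_pos hk
  have hfac : 2 * t ≤ (n.choose k).factorization q :=
    (Nat.Prime.pow_dvd_iff_le_factorization hq hpos.ne').mp hdvd3
  have h1 : q ^ (2 * t) ≤ q ^ ((n.choose k).factorization q) :=
    Nat.pow_le_pow_right hq.pos hfac
  have h2 : q ^ ((n.choose k).factorization q) ≤ n :=
    Nat.pow_factorization_choose_le hn
  have h3 : 0 < q ^ (2 * t) := Nat.pow_pos hq.pos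
  omega
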